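/- arXiv:1502.02591 — 2 statements merged into one kernel-verified Lean document; each statement's English description precedes it below -/
import Mathlib

section
/- (Wielandt) Let A be a d×d complex matrix and let |A| denote the matrix of absolute values of entries of A. Suppose |A| is aperiodic with Perron eigenvalue β. Then every eigenvalue of A has modulus at most β, and A has an eigenvalue βe^{iθ} if and only if A = e^{iθ} D |A| D⁻¹ for some diagonal matrix D whose diagonal entries all have modulus 1. -/
open Matrix
namespace WielandtAux
variable {d : ℕ}

lemma mulVec_mono {M : Matrix (Fin d) (Fin d) ℝ} (hM : ∀ i j, 0 ≤ M i j)
    {u w : Fin d → ℝ} (h : ∀ j, u j ≤ w j) (i : Fin d) : (M *ᵥ u) i ≤ (M *ᵥ w) i := by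
  simp only [Matrix.mulVec, dotProduct]
  exact Finset.sum_le_sum fun j _ => mul_le_mul_of_nonneg_left (h j) (hM i j)

lemma pow_entry_nonneg {M : Matrix (Fin d) (Fin d) ℝ} (hM : ∀ i j, 0 ≤ M i j) (n : ℕ) :
    ∀ i j, 0 ≤ (M ^ n) i j := by
  induction n with
  | zero => intro i j; simp [Matrix.one_apply]; positivity
  | succ n ih =>
    intro i j
    rw [pow_succ, Matrix.mul_apply]
    exact Finset.sum_nonneg fun k _ => mul_nonneg (ih i k) (hM k j)

lemma key (hd : 0 < d) {M : Matrix (Fin d) (Fin d) ℝ} (hM : ∀ i j, 0 ≤ M i j)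
    {β : ℝ} (hβpos : 0 < β) {v : Fin d → ℝ} (hv : ∀ i, 0 < v i)
    (hMv : M *ᵥ v = β • v)
    {u : Fin d → ℝ} (hu : ∀ i, 0 ≤ u i) {k : Fin d} (hk : 0 < u k)
    {c : ℝ} (hc : 0 ≤ c) (hcu : ∀ i, c * u i ≤ (M *ᵥ u) i) : c ≤ β := by
  by_contra hlt
  push_neg at hlt
  have hne : (Finset.univ : Finset (Fin d)).Nonempty := ⟨k, Finset.mem_univ k⟩
  set C : ℝ := Finset.univ.sup' hne (fun i => u i / v i) with hC
  have hCv : ∀ i, u i ≤ C * v i := by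
    intro i
    have h1 : u i / v i ≤ C := Finset.le_sup' (fun i => u i / v i) (Finset.mem_univ i)
    calc u i = (u i / v i) * v i := by
          rw [div_mul_cancel₀ _ (hv i).ne']
    _ ≤ C * v i := mul_le_mul_of_nonneg_right h1 (hv i).le
  have hpowv : ∀ m : ℕ, (M ^ m) *ᵥ v = β ^ m • v := by
    intro m
    induction m with
    | zero => simp
    | succ m ih =>
      rw [pow_succ, ← Matrix.mulVec_mulVec, hMv, Matrix.mulVec_smul, ih, smul_smul, pow_succ,
        mul_comm]
  have hpowu : ∀ m : ℕ, ∀ i, c ^ m * u i ≤ ((M ^ m) *ᵥ u) i := by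
    intro m
    induction m with
    | zero => intro i; simp
    | succ m ih =>
      intro i
      have h1 : c ^ (m+1) * u i = c * (c ^ m * u i) := by ring
      have h2 : c * (c ^ m * u i) ≤ c * (((M ^ m) *ᵥ u) i) :=
        mul_le_mul_of_nonneg_left (ih i) hc
      have h3 : c * (((M ^ m) *ᵥ u) i) = ((M ^ m) *ᵥ (c • u)) i := by
        rw [Matrix.mulVec_smul]; simp
      have h4 : ((M ^ m) *ᵥ (c • u)) i ≤ ((M ^ m) *ᵥ (M *ᵥ u)) i := by
        refine mulVec_mono (pow_entry_nonneg hM m) (fun j => ?_) i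
        simpa using hcu j
      have h5 : ((M ^ m) *ᵥ (M *ᵥ u)) i = ((M ^ (m+1)) *ᵥ u) i := by
        rw [Matrix.mulVec_mulVec, ← pow_succ]
      linarith
  have hup : ∀ m : ℕ, ((M ^ m) *ᵥ u) k ≤ C * β ^ m * v k := by
    intro m
    have h1 : ((M ^ m) *ᵥ u) k ≤ ((M ^ m) *ᵥ (C • v)) k :=
      mulVec_mono (pow_entry_nonneg hM m) (fun j => by simpa using hCv j) k
    have h2 : ((M ^ m) *ᵥ (C • v)) k = C * (β ^ m * v k) := by
      rw [Matrix.mulVec_smul, hpowv]; simp [mul_assoc]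
    linarith
  have hβc : 1 < c / β := (one_lt_div hβpos).mpr hlt
  obtain ⟨m, hm⟩ := pow_unbounded_of_one_lt (C * v k / u k) hβc
  have h1 : c ^ m * u k ≤ C * β ^ m * v k := le_trans (hpowu m k) (hup m)
  have h2 : C * v k / u k < c ^ m / β ^ m := by rw [← div_pow]; exact hm
  have hβm : (0:ℝ) < β ^ m := pow_pos hβpos m
  rw [div_lt_div_iff₀ hk hβm] at h2
  nlinarith

lemma abs_eq_re {w : ℂ} (h : ‖w‖ = w.re) : w = (‖w‖ : ℂ) := by
  have h1 := Complex.sq_norm w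
  rw [Complex.normSq_apply, h, sq] at h1
  have h2 : w.im * w.im = 0 := by linarith
  have him : w.im = 0 := mul_self_eq_zero.mp h2
  apply Complex.ext <;> simp [h, him]

lemma triangle_eq {s : Finset (Fin d)} (f : Fin d → ℂ)
    (h : ‖∑ j ∈ s, f j‖ = ∑ j ∈ s, ‖f j‖)
    (hs : (∑ j ∈ s, f j) ≠ 0) :
    ∀ j ∈ s, f j = (‖f j‖ : ℂ) * ((∑ j ∈ s, f j) / ‖∑ j ∈ s, f j‖) := by
  set S := ∑ j ∈ s, f j with hS
  set ζ : ℂ := S / ‖S‖ with hζ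
  have hSabs : (0:ℝ) < ‖S‖ := norm_pos_iff.mpr hs
  have hSne' : ((‖S‖ : ℂ)) ≠ 0 := by exact_mod_cast hSabs.ne'
  have hζabs : ‖ζ‖ = 1 := by
    rw [hζ, norm_div]; simp [hSabs.ne']
  have hkey : ∑ j ∈ s, ((starRingEnd ℂ) ζ * f j).re = ∑ j ∈ s, ‖f j‖ := by
    rw [← Complex.re_sum, ← Finset.mul_sum, ← hS, ← h]
    rw [hζ]
    have hc : (starRingEnd ℂ) (S / (‖S‖ : ℂ)) * S = ((‖S‖ : ℂ)) := by
      rw [map_div₀, Complex.conj_ofReal, div_mul_eq_mul_div, mul_comm, Complex.mul_conj,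
        Complex.normSq_eq_norm_sq]
      push_cast
      rw [sq, mul_div_assoc, div_self hSne', mul_one]
    rw [hc, Complex.ofReal_re]
  have heach : ∀ j ∈ s, ((starRingEnd ℂ) ζ * f j).re = ‖(starRingEnd ℂ) ζ * f j‖ := by
    have habs : ∀ j ∈ s, ‖(starRingEnd ℂ) ζ * f j‖ = ‖f j‖ := by
      intro j _
      rw [norm_mul, Complex.norm_conj, hζabs, one_mul]
    have hle : ∀ j ∈ s, ((starRingEnd ℂ) ζ * f j).re ≤ ‖(starRingEnd ℂ) ζ * f j‖ :=
      fun j _ => Complex.re_le_norm _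
    have hsum : ∑ j ∈ s, (‖(starRingEnd ℂ) ζ * f j‖ - ((starRingEnd ℂ) ζ * f j).re) = 0 := by
      rw [Finset.sum_sub_distrib, hkey, Finset.sum_congr rfl habs, sub_self]
    intro j hj
    have := (Finset.sum_eq_zero_iff_of_nonneg (fun j hj => by
      have := hle j hj; linarith)).mp hsum j hj
    linarith
  intro j hj
  have h1 : (starRingEnd ℂ) ζ * f j = (‖f j‖ : ℂ) := by
    have h2 := abs_eq_re (heach j hj).symm
    rwa [norm_mul, Complex.norm_conj, hζabs, one_mul] at h2
  have h3 : ζ * ((starRingEnd ℂ) ζ * f j) = f j := by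
    rw [← mul_assoc, Complex.mul_conj, Complex.normSq_eq_norm_sq, hζabs]
    simp
  calc f j = ζ * ((starRingEnd ℂ) ζ * f j) := h3.symm
    _ = ζ * (‖f j‖ : ℂ) := by rw [h1]
    _ = _ := mul_comm _ _

lemma mulVec_pos {M : Matrix (Fin d) (Fin d) ℝ} (hM : ∀ i j, 0 < M i j)
    {u : Fin d → ℝ} (hu : ∀ j, 0 ≤ u j) {k : Fin d} (hk : 0 < u k) (i : Fin d) :
    0 < (M *ᵥ u) i := by
  simp only [Matrix.mulVec, dotProduct]
  exact Finset.sum_pos' (fun j _ => mul_nonneg (hM i j).le (hu j))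
    ⟨k, Finset.mem_univ k, mul_pos (hM i k) hk⟩

lemma subinvariant {A : Matrix (Fin d) (Fin d) ℂ} {Aabs : Matrix (Fin d) (Fin d) ℝ}
    (hAabs : ∀ i j, Aabs i j = ‖A i j‖) {x : Fin d → ℂ} {z : ℂ}
    (hx : A *ᵥ x = z • x) (i : Fin d) :
    ‖z‖ * ‖x i‖ ≤ (Aabs *ᵥ (fun j => ‖x j‖)) i := by
  have h1 : ‖(A *ᵥ x) i‖ = ‖z‖ * ‖x i‖ := by
    rw [hx]; simp
  rw [← h1]
  show ‖∑ j, A i j * x j‖ ≤ ∑ j, Aabs i j * ‖x j‖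
  refine le_trans (norm_sum_le _ _) (le_of_eq (Finset.sum_congr rfl fun j _ => ?_))
  rw [norm_mul, hAabs]

lemma diag_entry (D : Fin d → ℂ) (M : Matrix (Fin d) (Fin d) ℝ) (e : ℂ) (i j : Fin d) :
    (e • (Matrix.diagonal D * (M.map fun r => (r : ℂ)) *
        Matrix.diagonal fun i => (D i)⁻¹)) i j = e * (D i * (M i j : ℂ) * (D j)⁻¹) := by
  simp [Matrix.diagonal_mul, Matrix.mul_diagonal, Matrix.map_apply, Matrix.smul_apply]

end WielandtAux

open WielandtAux in
/-- Wielandt's theorem: let `A` be a complex `d×d` matrix whose entrywise absolute value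
`|A|` is aperiodic with Perron eigenvalue `β` (the eigenvalue of `|A|` with a strictly
positive eigenvector).  Then every eigenvalue of `A` has modulus at most `β`, and `A`
has an eigenvalue `β·e^{iθ}` if and only if `A = e^{iθ} D |A| D⁻¹` for some diagonal
matrix `D` whose diagonal entries all have modulus one. -/
theorem wielandt (d : ℕ) (hd : 0 < d) (A : Matrix (Fin d) (Fin d) ℂ)
    (Aabs : Matrix (Fin d) (Fin d) ℝ)
    (hAabs : ∀ i j, Aabs i j = ‖A i j‖)
    (haper : ∃ n : ℕ, 1 ≤ n ∧ ∀ i j, 0 < (Aabs ^ n) i j)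
    (β : ℝ) (hβpos : 0 < β)
    (hβ : ∃ v : Fin d → ℝ, (∀ i, 0 < v i) ∧ Matrix.mulVec Aabs v = β • v) :
    (∀ z : ℂ, (∃ x : Fin d → ℂ, x ≠ 0 ∧ Matrix.mulVec A x = z • x) → ‖z‖ ≤ β) ∧
    (∀ θ : ℝ,
      (∃ x : Fin d → ℂ, x ≠ 0 ∧
          Matrix.mulVec A x = ((β : ℂ) * Complex.exp (θ * Complex.I)) • x) ↔
      (∃ D : Fin d → ℂ, (∀ i, ‖D i‖ = 1) ∧
        A = Complex.exp (θ * Complex.I) •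
          (Matrix.diagonal D * (Aabs.map fun r => (r : ℂ)) *
            Matrix.diagonal fun i => (D i)⁻¹))) := by
  obtain ⟨v, hv, hvβ⟩ := hβ
  obtain ⟨n, hn1, hpos⟩ := haper
  have hAnn : ∀ i j, 0 ≤ Aabs i j := fun i j => (hAabs i j) ▸ norm_nonneg _
  constructor
  · rintro z ⟨x, hx0, hxz⟩
    set u : Fin d → ℝ := fun i => ‖x i‖ with hu
    obtain ⟨k, hk⟩ : ∃ k, x k ≠ 0 := by
      by_contra hcon; push_neg at hcon; exact hx0 (funext fun i => hcon i)
    exact key hd hAnn hβpos hv hvβ (fun i => norm_nonneg _)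
      (norm_pos_iff.mpr hk) (norm_nonneg z) (subinvariant hAabs hxz)
  · intro θ
    constructor
    · rintro ⟨x, hx0, hxe⟩
      have heabs : ‖Complex.exp ((θ:ℂ) * Complex.I)‖ = 1 :=
        Complex.norm_exp_ofReal_mul_I θ
      set u : Fin d → ℝ := fun i => ‖x i‖ with hu
      obtain ⟨k, hk⟩ : ∃ k, x k ≠ 0 := by
        by_contra hcon; push_neg at hcon; exact hx0 (funext fun i => hcon i)
      have huk : 0 < u k := norm_pos_iff.mpr hk
      have hun : ∀ i, 0 ≤ u i := fun i => norm_nonneg _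
      have habsz : ‖(β:ℂ) * Complex.exp ((θ:ℂ) * Complex.I)‖ = β := by
        rw [norm_mul, heabs, Complex.norm_real, Real.norm_eq_abs, abs_of_pos hβpos, mul_one]
      have hsub : ∀ i, β * u i ≤ (Aabs *ᵥ u) i := fun i => by
        have h := subinvariant hAabs hxe i; rwa [habsz] at h
      have hEq : ∀ i, (Aabs *ᵥ u) i = β * u i := by
        by_contra hcon
        push_neg at hcon
        obtain ⟨i0, hi0⟩ := hcon
        set w : Fin d → ℝ := fun i => (Aabs *ᵥ u) i - β * u i with hw
        have hwn : ∀ i, 0 ≤ w i := fun i => by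
          simp only [hw]; linarith [hsub i]
        have hwi0 : 0 < w i0 := by
          rcases lt_or_eq_of_le (hwn i0) with h | h
          · exact h
          · exact absurd (by simp only [hw] at h; linarith) hi0
        set y := (Aabs ^ n) *ᵥ u with hy
        have hyp : ∀ i, 0 < y i := fun i => mulVec_pos hpos hun huk i
        set t := (Aabs ^ n) *ᵥ w with ht
        have htp : ∀ i, 0 < t i := fun i => mulVec_pos hpos hwn hwi0 i
        have hne : (Finset.univ : Finset (Fin d)).Nonempty := ⟨k, Finset.mem_univ k⟩
        set ε := Finset.univ.inf' hne (fun i => t i / y i) with hε'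
        have hε : 0 < ε := (Finset.lt_inf'_iff hne).mpr fun i _ => div_pos (htp i) (hyp i)
        have hεt : ∀ i, ε * y i ≤ t i := fun i => by
          have h1 : ε ≤ t i / y i := Finset.inf'_le _ (Finset.mem_univ i)
          calc ε * y i ≤ (t i / y i) * y i := mul_le_mul_of_nonneg_right h1 (hyp i).le
            _ = t i := div_mul_cancel₀ _ (hyp i).ne'
        have hmain : ∀ i, (β + ε) * y i ≤ (Aabs *ᵥ y) i := by
          intro i
          have h1 : Aabs *ᵥ y = (Aabs ^ n) *ᵥ (Aabs *ᵥ u) := by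
            rw [hy, Matrix.mulVec_mulVec, Matrix.mulVec_mulVec, ← pow_succ, ← pow_succ']
          have h2 : Aabs *ᵥ u = β • u + w := funext fun j => by
            simp only [hw, Pi.add_apply, Pi.smul_apply, smul_eq_mul]; ring
          have h3 : (Aabs ^ n) *ᵥ (Aabs *ᵥ u) = β • y + t := by
            rw [h2, Matrix.mulVec_add, Matrix.mulVec_smul, hy, ht]
          have h4 : (Aabs *ᵥ y) i = β * y i + t i := by
            rw [h1, h3]; simp
          have h5 := hεt i
          linarith
        have hcontr := key hd hAnn hβpos hv hvβ (fun i => (hyp i).le) (hyp k)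
          (by linarith) hmain
        linarith
      have hAu : Aabs *ᵥ u = β • u := funext fun i => by
        rw [hEq i]; simp
      have hun' : ∀ m : ℕ, (Aabs ^ m) *ᵥ u = β ^ m • u := by
        intro m
        induction m with
        | zero => simp
        | succ m ih =>
          rw [pow_succ, ← Matrix.mulVec_mulVec, hAu, Matrix.mulVec_smul, ih, smul_smul,
            pow_succ, mul_comm]
      have hupos : ∀ i, 0 < u i := by
        intro i
        have h1 : 0 < ((Aabs ^ n) *ᵥ u) i := mulVec_pos hpos hun huk i
        rw [hun' n] at h1
        simp only [Pi.smul_apply, smul_eq_mul] at h1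
        nlinarith [pow_pos hβpos n]
      have huC : ∀ i, ((u i : ℂ)) ≠ 0 := fun i => by
        exact_mod_cast (hupos i).ne'
      have hxne : ∀ i, x i ≠ 0 := fun i => by
        intro h0
        have : u i = 0 := by simp [hu, h0]
        exact (hupos i).ne' this
      refine ⟨fun i => x i / (u i : ℂ), ?_, ?_⟩
      · intro i
        rw [norm_div, Complex.norm_real, Real.norm_eq_abs, abs_of_pos (hupos i)]
        exact div_self (hupos i).ne'
      · ext i j
        rw [diag_entry]
        set e : ℂ := Complex.exp ((θ:ℂ) * Complex.I) with he
        have hene : e ≠ 0 := Complex.exp_ne_zero _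
        set f : Fin d → ℂ := fun j => A i j * x j with hf
        have hsum : ∑ j, f j = ((β:ℂ) * e) * x i := by
          have h := congrFun hxe i
          simpa [Matrix.mulVec, dotProduct, hf] using h
        have hSne : (∑ j, f j) ≠ 0 := by
          rw [hsum]
          exact mul_ne_zero (mul_ne_zero (by exact_mod_cast hβpos.ne') hene) (hxne i)
        have habsf : ∀ j, ‖f j‖ = Aabs i j * u j := by
          intro j
          rw [hf]
          simp only
          rw [norm_mul, hAabs]
        have htri : ‖∑ j, f j‖ = ∑ j, ‖f j‖ := by
          rw [hsum, norm_mul, habsz]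
          calc β * ‖x i‖ = β * u i := rfl
            _ = (Aabs *ᵥ u) i := (hEq i).symm
            _ = ∑ j, Aabs i j * u j := rfl
            _ = ∑ j, ‖f j‖ := by
                refine Finset.sum_congr rfl fun j _ => (habsf j).symm
        have hdiv : (∑ j, f j) / (‖∑ j, f j‖ : ℂ) = e * (x i / (u i : ℂ)) := by
          rw [hsum, norm_mul, habsz]
          have hβC : ((β:ℝ):ℂ) ≠ 0 := by exact_mod_cast hβpos.ne'
          have habsne : ((‖x i‖ : ℝ) : ℂ) ≠ 0 := huC i
          push_cast
          rw [div_eq_iff (mul_ne_zero hβC habsne)]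
          have hca : x i / ((‖x i‖ : ℝ) : ℂ) * ((‖x i‖ : ℝ) : ℂ) = x i :=
            div_mul_cancel₀ _ habsne
          calc (β:ℂ) * e * x i = (β:ℂ) * e * (x i / ((‖x i‖ : ℝ) : ℂ) *
              ((‖x i‖ : ℝ) : ℂ)) := by rw [hca]
            _ = e * (x i / ((‖x i‖ : ℝ) : ℂ)) * ((β:ℂ) * ((‖x i‖ : ℝ) : ℂ)) := by
                ring
        have hfj := triangle_eq f htri hSne j (Finset.mem_univ j)
        rw [hdiv, habsf j] at hfj
        -- hfj : A i j * x j = ↑(Aabs i j * u j) * (e * (x i / ↑(u i)))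
        have hxj : x j = (x j / (u j : ℂ)) * (u j : ℂ) := (div_mul_cancel₀ _ (huC j)).symm
        have hkey2 : A i j * ((x j / (u j : ℂ)) * (u j : ℂ)) =
            ((Aabs i j : ℂ) * (u j : ℂ)) * (e * (x i / (u i : ℂ))) := by
          rw [← hxj]
          rw [hf] at hfj
          simp only at hfj
          rw [hfj]
          push_cast
          ring
        have hDjne : x j / ((u j : ℝ) : ℂ) ≠ 0 := div_ne_zero (hxne j) (huC j)
        have hcc : A i j * (x j / (u j : ℂ)) = (Aabs i j : ℂ) * (e * (x i / (u i : ℂ))) := by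
          apply mul_right_cancel₀ (huC j)
          calc A i j * (x j / (u j : ℂ)) * (u j : ℂ)
              = A i j * (x j / (u j : ℂ) * (u j : ℂ)) := by ring
            _ = (Aabs i j : ℂ) * (u j : ℂ) * (e * (x i / (u i : ℂ))) := hkey2
            _ = (Aabs i j : ℂ) * (e * (x i / (u i : ℂ))) * (u j : ℂ) := by ring
        calc A i j = A i j * (x j / (u j : ℂ)) * (x j / (u j : ℂ))⁻¹ := by
              rw [mul_assoc, mul_inv_cancel₀ hDjne, mul_one]
          _ = (Aabs i j : ℂ) * (e * (x i / (u i : ℂ))) * (x j / (u j : ℂ))⁻¹ := by rw [hcc]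
          _ = e * (x i / (u i : ℂ) * (Aabs i j : ℂ) * (x j / (u j : ℂ))⁻¹) := by ring
    · rintro ⟨D, hD1, hDA⟩
      have hDne : ∀ i, D i ≠ 0 := fun i h0 => by
        have := hD1 i; rw [h0] at this; simp at this
      refine ⟨fun i => D i * (v i : ℂ), ?_, ?_⟩
      · intro h0
        have hi : (fun i => D i * (v i : ℂ)) ⟨0, hd⟩ = 0 := by rw [h0]; rfl
        have : D ⟨0, hd⟩ * ((v ⟨0, hd⟩ : ℝ) : ℂ) ≠ 0 :=
          mul_ne_zero (hDne _) (by exact_mod_cast (hv _).ne')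
        exact this hi
      · funext i
        have hentry : ∀ i j, A i j =
            Complex.exp (θ * Complex.I) * (D i * (Aabs i j : ℂ) * (D j)⁻¹) := by
          intro i j
          rw [hDA]
          rw [diag_entry]
        show ∑ j, A i j * (D j * (v j : ℂ)) = _
        have h2 : ((Aabs *ᵥ v) i : ℂ) = ∑ j, ((Aabs i j : ℂ) * (v j : ℂ)) := by
          simp only [Matrix.mulVec, dotProduct]
          push_cast
          rfl
        calc ∑ j, A i j * (D j * (v j : ℂ))
            = ∑ j, Complex.exp ((θ:ℂ) * Complex.I) * D i * ((Aabs i j : ℂ) * (v j : ℂ)) := by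
              refine Finset.sum_congr rfl fun j _ => ?_
              rw [hentry i j]
              have hinv : (D j)⁻¹ * D j = 1 := inv_mul_cancel₀ (hDne j)
              linear_combination (Complex.exp ((θ:ℂ) * Complex.I) * D i * (Aabs i j : ℂ) *
                (v j : ℂ)) * hinv
          _ = Complex.exp ((θ:ℂ) * Complex.I) * D i * ∑ j, ((Aabs i j : ℂ) * (v j : ℂ)) := by
              rw [Finset.mul_sum]
          _ = Complex.exp ((θ:ℂ) * Complex.I) * D i * ((Aabs *ᵥ v) i : ℂ) := by rw [h2]
          _ = _ := by
              have h3 : (Aabs *ᵥ v) i = β * v i := by rw [hvβ]; simp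
              rw [h3]
              push_cast
              simp only [Pi.smul_apply, smul_eq_mul]
              ring
end

section
/- For a positive integer k and real d > 0, (1/2πi) ∫_{d−i∞}^{d+i∞} yˢ / (s(s+1)⋯(s+k)) ds equals 0 if 0 < y < 1, and equals (1/k!)(1 − 1/y)^k if y ≥ 1. -/
open Filter intervalIntegral

open MeasureTheory Set Complex

/-- For a positive integer `k` and real `d > 0`, the vertical line integral
`(1/2πi) ∫_{d−i∞}^{d+i∞} yˢ/(s(s+1)⋯(s+k)) ds` (a limit of integrals over
`[d−iR, d+iR]` as `R → ∞`) equals `0` if `0 < y < 1` and `(1/k!)(1−1/y)^k` if `y ≥ 1`. -/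
theorem ingham_vertical_line_integral (k : ℕ) (hk : 1 ≤ k) (d y : ℝ)
    (hd : 0 < d) (hy : 0 < y) :
    Tendsto
      (fun R : ℝ =>
        (2 * Real.pi * Complex.I)⁻¹ *
          ∫ t in (-R)..R,
            Complex.I * (y : ℂ) ^ ((d : ℂ) + t * Complex.I) /
              ∏ j ∈ Finset.range (k + 1), ((d : ℂ) + t * Complex.I + j))
      atTop
      (nhds ((if 1 ≤ y then ((1 - 1 / y) ^ k / (Nat.factorial k) : ℝ) else 0 : ℝ) : ℂ)) := by
  have hkfac : ((k.factorial : ℂ)) ≠ 0 := Nat.cast_ne_zero.mpr k.factorial_ne_zero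
  set f : ℝ → ℂ := fun x => ((max (1 - x) 0 : ℝ) : ℂ) ^ k / (k.factorial : ℂ) with hf
  -- the indicator description of the mellin integrand
  have hind : ∀ s : ℂ, ∀ x ∈ Set.Ioi (0:ℝ), (x:ℂ)^(s-1) • f x =
      Set.indicator (Set.Ioc (0:ℝ) 1)
        (fun x : ℝ => (x:ℂ)^(s-1) * ((1:ℂ) - x)^k / (k.factorial : ℂ)) x := by
    intro s x hx
    by_cases h1 : x ≤ 1
    · rw [Set.indicator_of_mem (show x ∈ Set.Ioc (0:ℝ) 1 from ⟨hx, h1⟩)]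
      have hm : max (1 - x) 0 = 1 - x := max_eq_left (by linarith)
      simp only [hf, hm, smul_eq_mul]
      push_cast
      ring
    · rw [Set.indicator_of_notMem (by simp [h1])]
      have hm : max (1 - x) 0 = 0 := max_eq_right (by linarith)
      simp [hf, hm, zero_pow (by omega : k ≠ 0)]
  have hcpow : ∀ x : ℝ, ((1:ℂ) - x) ^ (((k:ℂ)+1) - 1) = ((1:ℂ) - x) ^ k := by
    intro x
    rw [add_sub_cancel_right, Complex.cpow_natCast]
  -- Mellin transform computation
  have hmel : ∀ s : ℂ, 0 < s.re →
      mellin f s = (∏ j ∈ Finset.range (k+1), (s + j))⁻¹ := by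
    intro s hs
    rw [mellin, MeasureTheory.setIntegral_congr_fun measurableSet_Ioi (hind s),
      MeasureTheory.setIntegral_indicator measurableSet_Ioc]
    have hint : Set.Ioi (0:ℝ) ∩ Set.Ioc 0 1 = Set.Ioc 0 1 :=
      Set.inter_eq_self_of_subset_right Set.Ioc_subset_Ioi_self
    rw [hint, ← intervalIntegral.integral_of_le zero_le_one]
    have hb := Complex.betaIntegral_eval_nat_add_one_right hs k
    rw [Complex.betaIntegral] at hb
    simp_rw [hcpow] at hb
    rw [intervalIntegral.integral_div, hb, div_div, mul_comm, div_mul_cancel_left₀ hkfac]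
  -- Mellin convergence at d
  have hconv : MellinConvergent f d := by
    have hb := Complex.betaIntegral_convergent (u := (d:ℂ)) (v := (k:ℂ)+1)
      (by simpa using hd) (by simp; positivity)
    have hb' : MeasureTheory.IntegrableOn
        (fun x : ℝ => (x:ℂ)^((d:ℂ)-1) * ((1:ℂ) - x)^k / (k.factorial : ℂ))
        (Set.Ioc (0:ℝ) 1) := by
      have := ((intervalIntegrable_iff_integrableOn_Ioc_of_le zero_le_one).mp hb).div_const
        ((k.factorial : ℂ))
      simp only [hcpow] at this
      exact this
    have hb'' : MeasureTheory.Integrable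
        (Set.indicator (Set.Ioc (0:ℝ) 1)
          (fun x : ℝ => (x:ℂ)^((d:ℂ)-1) * ((1:ℂ) - x)^k / (k.factorial : ℂ))) :=
      (MeasureTheory.integrable_indicator_iff measurableSet_Ioc).mpr hb'
    exact (hb''.integrableOn).congr_fun (fun x hx => (hind _ x hx).symm) measurableSet_Ioi
  -- the product and its basic properties
  set P : ℝ → ℂ := fun t => ∏ j ∈ Finset.range (k+1), ((d:ℂ) + t*Complex.I + j) with hPdef
  have hPre : ∀ t : ℝ, ((d:ℂ) + t*Complex.I).re = d := by intro t; simp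
  have hP0 : ∀ t : ℝ, P t ≠ 0 := by
    intro t
    refine Finset.prod_ne_zero_iff.mpr fun j _ => ?_
    intro h
    have h2 := congrArg Complex.re h
    simp only [Complex.add_re, Complex.ofReal_re, Complex.mul_re, Complex.I_re,
      Complex.ofReal_im, Complex.I_im, Complex.natCast_re, Complex.zero_re,
      mul_zero, mul_one, zero_mul, sub_zero, zero_sub, add_zero] at h2
    have h3 : (0:ℝ) ≤ (j:ℝ) := Nat.cast_nonneg j
    nlinarith
  have hPcont : Continuous P := by
    apply continuous_finset_prod
    intro j _
    fun_prop
  -- lower bound for ‖P t‖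
  obtain ⟨m, rfl⟩ : ∃ m, k = m + 1 := ⟨k - 1, by omega⟩
  set k := m + 1
  have hnorm : ∀ (t : ℝ) (j : ℕ),
      ‖(d:ℂ) + t*Complex.I + j‖ = Real.sqrt ((d+j)^2 + t^2) := by
    intro t j
    rw [Complex.norm_def, Complex.normSq_apply]
    have hre : ((d:ℂ) + t*Complex.I + j).re = d + j := by simp
    have him : ((d:ℂ) + t*Complex.I + j).im = t := by simp
    rw [hre, him]
    ring_nf
  have hlow : ∀ t : ℝ, d ^ m * (d^2 + t^2) ≤ ‖P t‖ := by
    intro t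
    have hnn : (0:ℝ) ≤ d^2 + t^2 := by positivity
    set g : ℕ → ℝ := fun j => if j ≤ 1 then Real.sqrt (d^2+t^2) else d with hg
    have hgprod : ∏ j ∈ Finset.range (k+1), g j = d ^ m * (d^2 + t^2) := by
      rw [show k + 1 = m + 1 + 1 from rfl, Finset.prod_range_succ', Finset.prod_range_succ']
      have h2 : ∀ i : ℕ, g (i + 1 + 1) = d := by
        intro i; simp only [hg]; rw [if_neg (by omega)]
      simp only [h2, Finset.prod_const, Finset.card_range]
      have h1 : g 1 = Real.sqrt (d^2+t^2) := by simp [hg]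
      have h0 : g 0 = Real.sqrt (d^2+t^2) := by simp [hg]
      rw [h1, h0, mul_assoc, Real.mul_self_sqrt hnn]
    have hbd : ∀ j ∈ Finset.range (k+1), g j ≤ ‖(d:ℂ) + t*Complex.I + j‖ := by
      intro j _
      rw [hnorm]
      by_cases h : j ≤ 1
      · simp only [hg, h, if_true]
        apply Real.sqrt_le_sqrt
        nlinarith [Nat.cast_nonneg (α := ℝ) j]
      · simp only [hg, h, if_false]
        have : d = Real.sqrt (d^2) := by rw [Real.sqrt_sq hd.le]
        rw [this]
        apply Real.sqrt_le_sqrt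
        nlinarith [Nat.cast_nonneg (α := ℝ) j]
    calc d ^ m * (d^2 + t^2) = ∏ j ∈ Finset.range (k+1), g j := hgprod.symm
      _ ≤ ∏ j ∈ Finset.range (k+1), ‖(d:ℂ) + t*Complex.I + j‖ :=
          Finset.prod_le_prod (fun j _ => by positivity) hbd
      _ = ‖P t‖ := (norm_prod _ _).symm
  have hlowpos : ∀ t : ℝ, (0:ℝ) < d ^ m * (d^2 + t^2) := by intro t; positivity
  have hinvbd : ∀ t : ℝ, ‖(P t)⁻¹‖ ≤ (d ^ m)⁻¹ * (d^2 + t^2)⁻¹ := by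
    intro t
    rw [norm_inv, ← mul_inv]
    exact inv_anti₀ (hlowpos t) (hlow t)
  -- the integrable majorant
  have hmaj : MeasureTheory.Integrable (fun t : ℝ => (d^2 + t^2)⁻¹) := by
    have h1 : MeasureTheory.Integrable (fun x : ℝ => (1 + x^2)⁻¹) := integrable_inv_one_add_sq
    have h2 := (h1.comp_div (show d ≠ 0 from hd.ne')).const_mul ((d^2)⁻¹)
    refine h2.congr ?_
    refine Filter.Eventually.of_forall fun t => ?_
    have hdne : d ≠ 0 := hd.ne'
    field_simp
  -- vertical integrability of the Mellin transform
  have hPinv_cont : Continuous (fun t : ℝ => (P t)⁻¹) := hPcont.inv₀ hP0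
  have hPinv_int : MeasureTheory.Integrable (fun t : ℝ => (P t)⁻¹) := by
    refine MeasureTheory.Integrable.mono' (hmaj.const_mul ((d ^ m)⁻¹))
      hPinv_cont.aestronglyMeasurable ?_
    exact Filter.Eventually.of_forall fun t => by simpa [mul_assoc] using hinvbd t
  have hvert : Complex.VerticalIntegrable (mellin f) d := by
    have he : (fun t : ℝ => mellin f ((d:ℝ) + t*Complex.I)) = fun t => (P t)⁻¹ := by
      funext t
      rw [hmel _ (by rw [hPre]; exact hd)]
    have h2 : MeasureTheory.Integrable (fun t : ℝ => mellin f ((d:ℝ) + t * Complex.I))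
        MeasureTheory.volume := by rw [he]; exact hPinv_int
    exact h2
  -- continuity of f
  have hfc : Continuous f := by
    apply Continuous.div_const
    apply Continuous.pow
    exact Complex.continuous_ofReal.comp ((continuous_const.sub continuous_id').max
      continuous_const)
  have hxy : (0:ℝ) < 1 / y := by positivity
  -- the inversion formula
  have hinv := mellinInv_mellin_eq d f hxy hconv hvert hfc.continuousAt
  -- the full-line integrand
  set G : ℝ → ℂ := fun t => (y:ℂ)^((d:ℂ) + t*Complex.I) * (P t)⁻¹ with hG
  have hyne : (y:ℂ) ≠ 0 := Complex.ofReal_ne_zero.mpr hy.ne'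
  have hGnorm : ∀ t : ℝ, ‖G t‖ = y ^ d * ‖(P t)⁻¹‖ := by
    intro t
    rw [hG, norm_mul]
    congr 1
    rw [Complex.norm_cpow_eq_rpow_re_of_pos hy, hPre]
  have hGcont : Continuous G :=
    ((continuous_const.add (continuous_ofReal.mul continuous_const)).const_cpow
      (Or.inl hyne)).mul hPinv_cont
  have hGint : MeasureTheory.Integrable G := by
    refine MeasureTheory.Integrable.mono' ((hmaj.const_mul ((d ^ m)⁻¹)).const_mul (y ^ d))
      hGcont.aestronglyMeasurable ?_
    refine Filter.Eventually.of_forall fun t => ?_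
    rw [hGnorm t]
    calc y ^ d * ‖(P t)⁻¹‖ ≤ y ^ d * ((d ^ m)⁻¹ * (d^2 + t^2)⁻¹) := by
          exact mul_le_mul_of_nonneg_left (hinvbd t) (Real.rpow_nonneg hy.le d)
      _ ≤ _ := le_rfl
  -- identify the limit value with the inversion formula
  have harg : ((y:ℂ)).arg ≠ Real.pi := by
    rw [Complex.arg_ofReal_of_nonneg hy.le]
    exact (Real.pi_ne_zero).symm
  have hval : mellinInv d (mellin f) (1/y) = ((2 * Real.pi : ℝ) : ℂ)⁻¹ * ∫ t : ℝ, G t := by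
    rw [mellinInv]
    have hrw : ∀ t : ℝ, ((1/y : ℝ):ℂ) ^ (-((d:ℂ) + t * Complex.I)) •
        mellin f ((d:ℂ) + t * Complex.I) = G t := by
      intro t
      have h1 : ((1/y : ℝ):ℂ) = ((y:ℂ))⁻¹ := by push_cast; rw [one_div]
      rw [smul_eq_mul, h1, Complex.inv_cpow _ _ harg, Complex.cpow_neg, inv_inv,
        hmel _ (by rw [hPre]; exact hd)]
    simp_rw [hrw]
    rw [Complex.real_smul]
    norm_num
  -- compute f (1/y)
  have hfval : f (1/y) =
      ((if 1 ≤ y then ((1 - 1 / y) ^ k / (Nat.factorial k) : ℝ) else 0 : ℝ) : ℂ) := by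
    by_cases h1 : 1 ≤ y
    · rw [if_pos h1]
      have h2 : 1 / y ≤ 1 := by rw [div_le_one hy]; exact h1
      have hm : max (1 - 1/y) 0 = 1 - 1/y := max_eq_left (by linarith)
      simp only [hf, hm]
      push_cast
      ring
    · rw [if_neg h1]
      push_neg at h1
      have h2 : 1 < 1 / y := by rw [lt_div_iff₀ hy]; linarith
      have hm : max (1 - 1/y) 0 = 0 := max_eq_right (by linarith)
      simp only [hf, hm, Complex.ofReal_zero, zero_pow (show k ≠ 0 by omega), zero_div]
  -- assemble the limit
  have htend : Tendsto (fun R : ℝ => ∫ t in (-R)..R, G t) atTop (nhds (∫ t : ℝ, G t)) :=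
    MeasureTheory.intervalIntegral_tendsto_integral hGint tendsto_neg_atTop_atBot tendsto_id
  have hfinal := htend.const_mul (((2 * Real.pi : ℝ) : ℂ))⁻¹
  rw [← hval, hinv, hfval] at hfinal
  refine hfinal.congr fun R => ?_
  have h1 : (∫ t in (-R)..R, Complex.I * (y:ℂ) ^ ((d:ℂ) + t * Complex.I) /
      ∏ j ∈ Finset.range (k + 1), ((d : ℂ) + t * Complex.I + j))
      = Complex.I * ∫ t in (-R)..R, G t := by
    rw [← intervalIntegral.integral_const_mul]
    apply intervalIntegral.integral_congr
    intro t _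
    simp only [hG]
    rw [div_eq_mul_inv, mul_assoc]
  rw [h1, ← mul_assoc]
  congr 1
  have hπ : ((Real.pi : ℂ)) ≠ 0 := by
    simpa using Real.pi_ne_zero
  have hI := Complex.I_ne_zero
  push_cast
  field_simp
end
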